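/- arXiv:0810.4006 — 12 statements merged into one kernel-verified Lean document; each statement's English description precedes it below -/
import Mathlib

section
/- Let I ⊆ ℝ be an open interval, let b0, b1, b2 : I → ℝ be differentiable with b0(t)·b2(t) ≠ 0 for all t ∈ I, and let c0, c1, c2 be real constants with c0·c2 ≠ 0 and b2(t)·c0/(b0(t)·c2) > 0 for all t ∈ I. Define G(t) = √(b2(t)·c0/(b0(t)·c2)) and D(t) = b2(t)/(c2·G(t)). If b1(t) + (1/2)·(b2'(t)/b2(t) − b0'(t)/b0(t)) = c1·D(t) for all t ∈ I, then for every differentiable solution y : I → ℝ of the Riccati equation y' = b0(t) + b1(t)·y + b2(t)·y², the function z(t) = G(t)·y(t) satisfies z'(t) = D(t)·(c0 + c1·z(t) + c2·z(t)²) for all t ∈ I. Moreover D(t)²·c0·c2 = b0(t)·b2(t) for all t ∈ I. -/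
/-- A time-dependent dilation `z = G(t)·y` with
`G(t) = √(b2·c0/(b0·c2))` maps solutions of the Riccati equation
`y' = b0 + b1·y + b2·y²` to solutions of `z' = D(t)·(c0 + c1·z + c2·z²)`,
provided the integrability condition
`b1 + (1/2)(b2'/b2 − b0'/b0) = c1·D` holds; moreover `D²·c0·c2 = b0·b2`. -/
theorem riccati_dilation_transform
    (I : Set ℝ) (hIopen : IsOpen I) (hIint : Convex ℝ I)
    (b0 b1 b2 d0 d1 d2 : ℝ → ℝ)
    (hb0 : ∀ t ∈ I, HasDerivAt b0 (d0 t) t)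
    (hb1 : ∀ t ∈ I, HasDerivAt b1 (d1 t) t)
    (hb2 : ∀ t ∈ I, HasDerivAt b2 (d2 t) t)
    (hne : ∀ t ∈ I, b0 t * b2 t ≠ 0)
    (c0 c1 c2 : ℝ) (hc : c0 * c2 ≠ 0)
    (hpos : ∀ t ∈ I, b2 t * c0 / (b0 t * c2) > 0)
    (G D : ℝ → ℝ)
    (hG : ∀ t, G t = Real.sqrt (b2 t * c0 / (b0 t * c2)))
    (hD : ∀ t, D t = b2 t / (c2 * G t))
    (hcond : ∀ t ∈ I, b1 t + (1/2) * (d2 t / b2 t - d0 t / b0 t) = c1 * D t) :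
    (∀ y : ℝ → ℝ,
      (∀ t ∈ I, HasDerivAt y (b0 t + b1 t * y t + b2 t * (y t)^2) t) →
      ∀ t ∈ I, HasDerivAt (fun s => G s * y s)
        (D t * (c0 + c1 * (G t * y t) + c2 * (G t * y t)^2)) t) ∧
    (∀ t ∈ I, (D t)^2 * c0 * c2 = b0 t * b2 t) := by
  have hc0 : c0 ≠ 0 := left_ne_zero_of_mul hc
  have hc2 : c2 ≠ 0 := right_ne_zero_of_mul hc
  have key : ∀ t ∈ I, b0 t ≠ 0 ∧ b2 t ≠ 0 ∧ 0 < G t ∧ (G t)^2 = b2 t * c0 / (b0 t * c2) := by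
    intro t ht
    have h0 : b0 t ≠ 0 := left_ne_zero_of_mul (hne t ht)
    have h2 : b2 t ≠ 0 := right_ne_zero_of_mul (hne t ht)
    have hft := hpos t ht
    refine ⟨h0, h2, ?_, ?_⟩
    · rw [hG t]; exact Real.sqrt_pos.2 hft
    · rw [hG t]; exact Real.sq_sqrt hft.le
  constructor
  · intro y hy t ht
    obtain ⟨h0, h2, hGpos, hGsq⟩ := key t ht
    have hGne : G t ≠ 0 := ne_of_gt hGpos
    have hb0c2 : b0 t * c2 ≠ 0 := mul_ne_zero h0 hc2
    -- derivative of f = b2*c0/(b0*c2)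
    have hfd : HasDerivAt (fun s => b2 s * c0 / (b0 s * c2))
        ((d2 t * c0 * (b0 t * c2) - b2 t * c0 * (d0 t * c2)) / (b0 t * c2)^2) t :=
      ((hb2 t ht).mul_const c0).div ((hb0 t ht).mul_const c2) hb0c2
    have hGfun : G = fun s => Real.sqrt (b2 s * c0 / (b0 s * c2)) := funext hG
    have hGd : HasDerivAt G
        (1 / (2 * G t) * ((d2 t * c0 * (b0 t * c2) - b2 t * c0 * (d0 t * c2)) / (b0 t * c2)^2)) t := by
      have hsq := (Real.hasDerivAt_sqrt (ne_of_gt (hpos t ht))).comp t hfd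
      rw [hGfun]
      exact hsq
    have hz := hGd.mul (hy t ht)
    refine hz.congr_deriv (Eq.symm ?_)
    have hA : (G t)^2 * (b0 t * c2) = b2 t * c0 := by
      rw [hGsq]; field_simp
    have hc0val : c0 = G t ^ 2 * b0 t * c2 / b2 t := by
      rw [eq_div_iff h2]; linear_combination -hA
    have hDval : D t = G t * b0 t / c0 := by
      rw [hD, div_eq_div_iff (mul_ne_zero hc2 hGne) hc0]
      linear_combination -hA
    have hDne : D t ≠ 0 := by
      rw [hDval]; exact div_ne_zero (mul_ne_zero hGne h0) hc0
    have hc1val : c1 = (b1 t + (1/2) * (d2 t / b2 t - d0 t / b0 t)) / D t := by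
      rw [hcond t ht]; field_simp
    rw [hc1val, hDval, hc0val]
    field_simp
    ring
  · intro t ht
    obtain ⟨h0, h2, hGpos, hGsq⟩ := key t ht
    have hGne : G t ≠ 0 := ne_of_gt hGpos
    have hA : (G t)^2 * (b0 t * c2) = b2 t * c0 := by
      rw [hGsq]; field_simp
    rw [hD]
    field_simp
    linear_combination -hA
end

section
/- Let I ⊆ ℝ be an open interval, let b0, b1, b2 : I → ℝ be differentiable with b0(t)·b2(t) ≠ 0 for all t ∈ I, let c0, c1, c2 be real constants with c0·c2 ≠ 0, and let D : I → ℝ and G : I → ℝ with G differentiable and G(t) > 0 for all t. Suppose that for all t ∈ I and all y ∈ ℝ the transformation identity G'(t)·y + G(t)·(b0(t) + b1(t)·y + b2(t)·y²) = D(t)·(c0 + c1·G(t)·y + c2·G(t)²·y²) holds (i.e., y' = G(t)·y maps the Riccati equation with coefficients b0, b1, b2 into the equation dy'/dt = D(t)·(c0 + c1·y' + c2·y'²)). Then necessarily D(t)²·c0·c2 = b0(t)·b2(t), b1(t) + (1/2)·(b2'(t)/b2(t) − b0'(t)/b0(t)) = c1·D(t), and G(t) = √(b2(t)·c0/(b0(t)·c2))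 for all t ∈ I. -/
/-- If the dilation `y' = G(t)·y` (with `G > 0` differentiable)
relates the Riccati equation with coefficients `b0, b1, b2` to the equation
`dy'/dt = D(t)·(c0 + c1·y' + c2·y'²)` identically in `y`, then necessarily
`D²·c0·c2 = b0·b2`, `b1 + (1/2)(b2'/b2 − b0'/b0) = c1·D`, and
`G = √(b2·c0/(b0·c2))`. -/
theorem riccati_dilation_necessary_conditions
    (I : Set ℝ) (hIopen : IsOpen I) (hIint : Convex ℝ I)
    (b0 b1 b2 d0 d1 d2 : ℝ → ℝ)
    (hb0 : ∀ t ∈ I, HasDerivAt b0 (d0 t) t)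
    (hb1 : ∀ t ∈ I, HasDerivAt b1 (d1 t) t)
    (hb2 : ∀ t ∈ I, HasDerivAt b2 (d2 t) t)
    (hne : ∀ t ∈ I, b0 t * b2 t ≠ 0)
    (c0 c1 c2 : ℝ) (hc : c0 * c2 ≠ 0)
    (D G G' : ℝ → ℝ)
    (hGd : ∀ t ∈ I, HasDerivAt G (G' t) t)
    (hGpos : ∀ t ∈ I, G t > 0)
    (hid : ∀ t ∈ I, ∀ y : ℝ,
      G' t * y + G t * (b0 t + b1 t * y + b2 t * y^2)
        = D t * (c0 + c1 * (G t * y) + c2 * (G t)^2 * y^2)) :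
    ∀ t ∈ I,
      (D t)^2 * c0 * c2 = b0 t * b2 t ∧
      b1 t + (1/2) * (d2 t / b2 t - d0 t / b0 t) = c1 * D t ∧
      G t = Real.sqrt (b2 t * c0 / (b0 t * c2)) := by
  have hc0 : c0 ≠ 0 := fun h => hc (by simp [h])
  have hc2 : c2 ≠ 0 := fun h => hc (by simp [h])
  -- coefficient identities at every point of I
  have k1 : ∀ t ∈ I, G t * b0 t = D t * c0 := by
    intro t ht
    have := hid t ht 0
    simpa using this
  have kA : ∀ t ∈ I, b2 t = D t * c2 * G t := by
    intro t ht
    have e1 := hid t ht 1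
    have e2 := hid t ht (-1)
    have hG0 : G t ≠ 0 := ne_of_gt (hGpos t ht)
    have h : G t * b2 t = G t * (D t * c2 * G t) := by
      linear_combination (e1 + e2) / 2 - k1 t ht
    exact mul_left_cancel₀ hG0 h
  have kB : ∀ t ∈ I, G' t + G t * b1 t = D t * c1 * G t := by
    intro t ht
    have e1 := hid t ht 1
    have e2 := hid t ht (-1)
    linear_combination (e1 - e2) / 2
  have k3 : ∀ t ∈ I, G t ^ 2 * b0 t * c2 = b2 t * c0 := by
    intro t ht
    have h1 := k1 t ht
    have h2 := kA t ht
    linear_combination (c2 * G t) * h1 - c0 * h2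
  intro t ht
  have hG0 : G t ≠ 0 := ne_of_gt (hGpos t ht)
  have hb0ne : b0 t ≠ 0 := fun h => hne t ht (by simp [h])
  have hb2ne : b2 t ≠ 0 := fun h => hne t ht (by simp [h])
  refine ⟨?_, ?_, ?_⟩
  · -- D² c0 c2 = b0 b2
    have h1 := k1 t ht
    have h2 := kA t ht
    have h : (D t)^2 * c0 * c2 * G t = b0 t * b2 t * G t := by
      linear_combination (-(D t * c2 * G t)) * h1 + (-(b0 t * G t)) * h2
    exact mul_right_cancel₀ hG0 h
  · -- derivative relation
    have hF : HasDerivAt (fun s => G s ^ 2 * b0 s * c2 - b2 s * c0)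
        ((2 * G t * G' t * b0 t + G t ^ 2 * d0 t) * c2 - d2 t * c0) t := by
      have h : HasDerivAt (fun s => G s ^ 2 * b0 s)
          (2 * G t * G' t * b0 t + G t ^ 2 * d0 t) t := by
        have : HasDerivAt (fun s => G s ^ 2 * b0 s) (((2:ℕ):ℝ) * G t ^ (2 - 1) * G' t * b0 t + G t ^ 2 * d0 t) t := (((hGd t ht).pow 2).mul (hb0 t ht))
        convert this using 1
        ring
      exact (h.mul_const c2).sub ((hb2 t ht).mul_const c0)
    have hEq : (fun s => G s ^ 2 * b0 s * c2 - b2 s * c0) =ᶠ[nhds t] fun _ => (0:ℝ) := by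
      filter_upwards [hIopen.mem_nhds ht] with s hs
      have := k3 s hs
      linarith
    have hF0 : HasDerivAt (fun s => G s ^ 2 * b0 s * c2 - b2 s * c0) 0 t :=
      (hasDerivAt_const t (0:ℝ)).congr_of_eventuallyEq hEq
    have k4 : (2 * G t * G' t * b0 t + G t ^ 2 * d0 t) * c2 - d2 t * c0 = 0 :=
      hF.unique hF0
    have hB := kB t ht
    have h3 := k3 t ht
    have e5 : (2 * G' t * b2 t * b0 t) * c0 = ((d2 t * b0 t - d0 t * b2 t) * G t) * c0 := by
      linear_combination (b0 t * G t) * k4 - (2 * G' t * b0 t + G t * d0 t) * h3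
    have e6 : 2 * G' t * b2 t * b0 t = (d2 t * b0 t - d0 t * b2 t) * G t :=
      mul_right_cancel₀ hc0 e5
    field_simp
    have goalG : (b1 t * (2 * (b2 t * b0 t)) + (d2 t * b0 t - b2 t * d0 t)) * G t
        = c1 * D t * (2 * (b2 t * b0 t)) * G t := by
      linear_combination (2 * b2 t * b0 t) * hB - e6
    linarith [mul_right_cancel₀ hG0 goalG]
  · -- G = sqrt(...)
    have h3 := k3 t ht
    have : b2 t * c0 / (b0 t * c2) = G t ^ 2 := by
      field_simp
      linarith [h3]
    rw [this, Real.sqrt_sq (le_of_lt (hGpos t ht))]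
end

section
/- Let I ⊆ ℝ be an open interval and let b0, b1, b2 : I → ℝ be differentiable with b0(t)·b2(t) ≠ 0 for all t ∈ I. Suppose there exist real constants K and L with L/(b0(t)·b2(t)) > 0 for all t ∈ I such that (b1(t) + (1/2)·(b2'(t)/b2(t) − b0'(t)/b0(t)))·√(L/(b0(t)·b2(t))) = K for all t ∈ I. Then there exist constants c0, c2 with c0·c2 = L, a positive differentiable function G : I → ℝ, and the function D(t) = √(b0(t)·b2(t)/L) such that for every differentiable solution y : I → ℝ of y' = b0(t) + b1(t)·y + b2(t)·y², the function z = G·y satisfies z'(t) = D(t)·(c0 + K·z(t) + c2·z(t)²) on I. -/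
lemma riccati_aux_same_sign {I : Set ℝ} (hc : Convex ℝ I) {f : ℝ → ℝ}
    (hf : ContinuousOn f I) (hne : ∀ t ∈ I, f t ≠ 0) {a b : ℝ}
    (ha : a ∈ I) (hb : b ∈ I) (hfa : 0 < f a) : 0 < f b := by
  by_contra h
  have hfb : f b < 0 := lt_of_le_of_ne (not_lt.mp h) (hne b hb)
  have hsub : Set.uIcc a b ⊆ I := hc.ordConnected.uIcc_subset ha hb
  have h0 : (0:ℝ) ∈ Set.uIcc (f a) (f b) :=
    Set.mem_uIcc.mpr (Or.inr ⟨hfb.le, hfa.le⟩)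
  obtain ⟨s, hs, hfs⟩ := intermediate_value_uIcc (hf.mono hsub) h0
  exact hne s (hsub hs) hfs


/-- Sufficient integrability condition for the Riccati equation:
if there are constants `K, L` with `L/(b0·b2) > 0` and
`(b1 + (1/2)(b2'/b2 − b0'/b0))·√(L/(b0·b2)) = K` on `I`, then there are
constants `c0, c2` with `c0·c2 = L` and a positive differentiable dilation `G`
so that `z = G·y` transforms any solution of `y' = b0 + b1·y + b2·y²` into a
solution of `z' = D(t)·(c0 + K·z + c2·z²)` with `D(t) = √(b0·b2/L)`. -/
theorem riccati_integrability_criterion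
    (I : Set ℝ) (hIopen : IsOpen I) (hIint : Convex ℝ I)
    (b0 b1 b2 d0 d1 d2 : ℝ → ℝ)
    (hb0 : ∀ t ∈ I, HasDerivAt b0 (d0 t) t)
    (hb1 : ∀ t ∈ I, HasDerivAt b1 (d1 t) t)
    (hb2 : ∀ t ∈ I, HasDerivAt b2 (d2 t) t)
    (hne : ∀ t ∈ I, b0 t * b2 t ≠ 0)
    (K L : ℝ)
    (hL : ∀ t ∈ I, L / (b0 t * b2 t) > 0)
    (hK : ∀ t ∈ I,
      (b1 t + (1/2) * (d2 t / b2 t - d0 t / b0 t)) *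
        Real.sqrt (L / (b0 t * b2 t)) = K) :
    ∃ c0 c2 : ℝ, c0 * c2 = L ∧
      ∃ G : ℝ → ℝ, (∀ t ∈ I, 0 < G t) ∧ (∀ t ∈ I, DifferentiableAt ℝ G t) ∧
        ∀ y : ℝ → ℝ,
          (∀ t ∈ I, HasDerivAt y (b0 t + b1 t * y t + b2 t * (y t)^2) t) →
          ∀ t ∈ I, HasDerivAt (fun s => G s * y s)
            (Real.sqrt (b0 t * b2 t / L) *
              (c0 + K * (G t * y t) + c2 * (G t * y t)^2)) t := by
  by_cases hI : I.Nonempty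
  swap
  · refine ⟨1, L, one_mul L, fun _ => 1, ?_, ?_, ?_⟩
    · intro t ht; exact absurd ⟨t, ht⟩ hI
    · intro t ht; exact absurd ⟨t, ht⟩ hI
    · intro y hy t ht; exact absurd ⟨t, ht⟩ hI
  obtain ⟨t0, ht0⟩ := hI
  have hb0ne : ∀ t ∈ I, b0 t ≠ 0 := fun t ht => left_ne_zero_of_mul (hne t ht)
  have hb2ne : ∀ t ∈ I, b2 t ≠ 0 := fun t ht => right_ne_zero_of_mul (hne t ht)
  have hLne : L ≠ 0 := by
    intro h
    have := hL t0 ht0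
    rw [h] at this
    simp at this
  have hcont : ContinuousOn b0 I := fun t ht => ((hb0 t ht).continuousAt).continuousWithinAt
  have hLmul : ∀ t ∈ I, 0 < L * (b0 t * b2 t) := by
    intro t ht
    rcases div_pos_iff.mp (hL t ht) with ⟨h1, h2⟩ | ⟨h1, h2⟩
    · exact mul_pos h1 h2
    · exact mul_pos_of_neg_of_neg h1 h2
  set ε : ℝ := if 0 < b0 t0 then 1 else -1 with hεdef
  have hεcases : ε = 1 ∨ ε = -1 := by rw [hεdef]; split <;> simp
  have hε2 : ε * ε = 1 := by rcases hεcases with h | h <;> rw [h] <;> norm_num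
  have hsign : ∀ t ∈ I, 0 < ε * b0 t := by
    intro t ht
    rw [hεdef]
    split
    · next h =>
      rw [one_mul]
      exact riccati_aux_same_sign hIint hcont hb0ne ht0 ht h
    · next h =>
      have hneg : b0 t0 < 0 := lt_of_le_of_ne (not_lt.mp h) (hb0ne t0 ht0)
      have := riccati_aux_same_sign hIint (hcont.neg) (fun s hs => neg_ne_zero.mpr (hb0ne s hs))
        ht0 ht (by simpa using hneg)
      simpa using this
  have hu_pos : ∀ t ∈ I, 0 < b2 t / (L * b0 t) := by
    intro t ht
    have h2 := hb2ne t ht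
    have h0 := hb0ne t ht
    have heq : b2 t / (L * b0 t) = (b2 t)^2 / (L * (b0 t * b2 t)) := by
      field_simp
    rw [heq]
    exact div_pos (by positivity) (hLmul t ht)
  have hDpos : ∀ t ∈ I, 0 < b0 t * b2 t / L := by
    intro t ht
    have h0 := hb0ne t ht
    have h2 := hb2ne t ht
    have heq : b0 t * b2 t / L = (L * (b0 t * b2 t)) / L^2 := by
      field_simp
    rw [heq]
    exact div_pos (hLmul t ht) (by positivity)
  refine ⟨ε, ε * L, by linear_combination L * hε2, fun s => Real.sqrt (b2 s / (L * b0 s)),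
    fun t ht => Real.sqrt_pos.mpr (hu_pos t ht), ?_, ?_⟩
  · intro t ht
    have hu' : HasDerivAt (fun s => b2 s / (L * b0 s))
        ((d2 t * (L * b0 t) - b2 t * (L * d0 t)) / (L * b0 t)^2) t :=
      (hb2 t ht).div ((hb0 t ht).const_mul L) (mul_ne_zero hLne (hb0ne t ht))
    exact ((Real.hasDerivAt_sqrt (hu_pos t ht).ne').comp t hu').differentiableAt
  · intro y hy t ht
    have h0 := hb0ne t ht
    have h2 := hb2ne t ht
    have hup := hu_pos t ht
    have hGne : Real.sqrt (b2 t / (L * b0 t)) ≠ 0 := (Real.sqrt_pos.mpr hup).ne'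
    have hu' : HasDerivAt (fun s => b2 s / (L * b0 s))
        ((d2 t * (L * b0 t) - b2 t * (L * d0 t)) / (L * b0 t)^2) t :=
      (hb2 t ht).div ((hb0 t ht).const_mul L) (mul_ne_zero hLne h0)
    have hGd : HasDerivAt (fun s => Real.sqrt (b2 s / (L * b0 s)))
        (1 / (2 * Real.sqrt (b2 t / (L * b0 t))) *
          ((d2 t * (L * b0 t) - b2 t * (L * d0 t)) / (L * b0 t)^2)) t :=
      (Real.hasDerivAt_sqrt hup.ne').comp t hu'
    have hz := hGd.mul (hy t ht)
    refine hz.congr_deriv ?_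
    beta_reduce
    set G := Real.sqrt (b2 t / (L * b0 t)) with hGdef
    set D := Real.sqrt (b0 t * b2 t / L) with hDdef
    set g' := 1 / (2 * G) * ((d2 t * (L * b0 t) - b2 t * (L * d0 t)) / (L * b0 t)^2) with hg'def
    have hGsq : G * G = b2 t / (L * b0 t) := Real.mul_self_sqrt hup.le
    -- hA : b0 t * G = ε * D
    have hA : b0 t * G = ε * D := by
      have h1 : b0 t * b2 t / L = (b0 t)^2 * (b2 t / (L * b0 t)) := by
        field_simp
      have habs : |b0 t| = ε * b0 t := by
        have hs := hsign t ht
        rcases hεcases with h | h <;> rw [h] at hs ⊢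
        · rw [one_mul] at hs ⊢; exact abs_of_pos hs
        · rw [neg_one_mul] at hs ⊢
          exact abs_of_neg (by linarith)
      rw [hDdef, h1, Real.sqrt_mul (sq_nonneg _), Real.sqrt_sq_eq_abs, habs, ← hGdef]
      linear_combination (-(b0 t * G)) * hε2
    -- hDG : D * G * L = ε * b2 t
    have hDG : D * G * L = ε * b2 t := by
      have h1 : (b0 t * b2 t / L) * (b2 t / (L * b0 t)) = (b2 t / L)^2 := by
        field_simp
      have hεb2L : 0 < ε * (b2 t / L) := by
        have heq : ε * (b2 t / L) = (ε * b0 t) * (L * (b0 t * b2 t)) / (L^2 * (b0 t)^2) := by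
          field_simp
        rw [heq]
        exact div_pos (mul_pos (hsign t ht) (hLmul t ht)) (by positivity)
      have habs : |b2 t / L| = ε * (b2 t / L) := by
        rcases hεcases with h | h <;> rw [h] at hεb2L ⊢
        · rw [one_mul] at hεb2L ⊢; exact abs_of_pos hεb2L
        · rw [neg_one_mul] at hεb2L ⊢
          exact abs_of_neg (by linarith)
      have h2' : D * G = ε * (b2 t / L) := by
        rw [hDdef, hGdef, ← Real.sqrt_mul (hDpos t ht).le, h1, Real.sqrt_sq_eq_abs, habs]
      rw [h2']
      field_simp
    -- hB : b2 t * G = ε * L * D * G^2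
    have hB : b2 t * G = ε * L * D * G^2 := by
      rcases hεcases with h | h <;> rw [h] at hDG ⊢
      · linear_combination (-G) * hDG
      · linear_combination G * hDG
    -- hKD : K * D = b1 t + (1/2) * (d2 t / b2 t - d0 t / b0 t)
    have hinv : Real.sqrt (L / (b0 t * b2 t)) * D = 1 := by
      rw [hDdef, ← Real.sqrt_mul (hL t ht).le]
      rw [show L / (b0 t * b2 t) * (b0 t * b2 t / L) = 1 by field_simp]
      exact Real.sqrt_one
    have hKD : K * D = b1 t + (1/2) * (d2 t / b2 t - d0 t / b0 t) := by
      rw [← hK t ht]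
      linear_combination (b1 t + (1/2) * (d2 t / b2 t - d0 t / b0 t)) * hinv
    -- hC : g' + b1 t * G = K * D * G
    have hC : g' + b1 t * G = K * D * G := by
      have hcancel : (g' + b1 t * G - K * D * G) * (2 * G) = 0 := by
        have hg2 : g' * (2 * G) = (d2 t * (L * b0 t) - b2 t * (L * d0 t)) / (L * b0 t)^2 := by
          rw [hg'def]; field_simp
        have hfield : (d2 t * (L * b0 t) - b2 t * (L * d0 t)) / (L * b0 t)^2
            = (d2 t / b2 t - d0 t / b0 t) * (b2 t / (L * b0 t)) := by
          field_simp
        have expand : (g' + b1 t * G - K * D * G) * (2 * G)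
            = g' * (2 * G) + 2 * (b1 t - K * D) * (G * G) := by ring
        rw [expand, hg2, hfield, hGsq]
        linear_combination (-2 * (b2 t / (L * b0 t))) * hKD
      rcases mul_eq_zero.mp hcancel with h | h
      · linarith [h]
      · exact absurd h (by positivity)
    linear_combination hA + hC * (y t) + hB * (y t)^2
end

section
/- Let I ⊆ ℝ be an interval, let b0, b1, b2 : I → ℝ, and let α, β, γ, δ : I → ℝ be differentiable functions with α(t)·δ(t) − β(t)·γ(t) = 1 for all t ∈ I. Let x : I → ℝ be a differentiable solution of x' = b0(t) + b1(t)·x + b2(t)·x² such that γ(t)·x(t) + δ(t) ≠ 0 for all t ∈ I. Then the function y(t) = (α(t)·x(t) + β(t))/(γ(t)·x(t) + δ(t)) is differentiable and satisfies the Riccati equation y' = b0'(t)_new + b1'(t)_new·y + b2'(t)_new·y², where b2'_new = δ²·b2 − δ·γ·b1 + γ²·b0 + γ·δ' − δ·γ', b1'_new = −2·β·δ·b2 + (α·δ + β·γ)·b1 − 2·α·γ·b0 + δ·α' − α·δ' + β·γ' − γ·β', and b0'_new = β²·b2 − α·β·b1 + α²·b0 + α·β' − β·α'. -/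
/-- A curve `A(t) = [[α, β], [γ, δ]]` in `SL(2, ℝ)` acts on solutions
of the Riccati equation `x' = b0 + b1·x + b2·x²` by the fractional linear
transformation `y = (α·x + β)/(γ·x + δ)`, producing a solution of a new Riccati
equation with the transformed coefficients. -/
theorem riccati_sl2_action
    (I : Set ℝ) (hI : Convex ℝ I)
    (b0 b1 b2 α β γ δ dα dβ dγ dδ x : ℝ → ℝ)
    (hα : ∀ t ∈ I, HasDerivAt α (dα t) t)
    (hβ : ∀ t ∈ I, HasDerivAt β (dβ t) t)
    (hγ : ∀ t ∈ I, HasDerivAt γ (dγ t) t)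
    (hδ : ∀ t ∈ I, HasDerivAt δ (dδ t) t)
    (hdet : ∀ t ∈ I, α t * δ t - β t * γ t = 1)
    (hx : ∀ t ∈ I, HasDerivAt x (b0 t + b1 t * x t + b2 t * (x t)^2) t)
    (hden : ∀ t ∈ I, γ t * x t + δ t ≠ 0) :
    ∀ t ∈ I, HasDerivAt (fun s => (α s * x s + β s) / (γ s * x s + δ s))
      (((β t)^2 * b2 t - α t * β t * b1 t + (α t)^2 * b0 t
          + α t * dβ t - β t * dα t)
        + (-(2 * β t * δ t * b2 t) + (α t * δ t + β t * γ t) * b1 t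
            - 2 * α t * γ t * b0 t
            + δ t * dα t - α t * dδ t + β t * dγ t - γ t * dβ t)
          * ((α t * x t + β t) / (γ t * x t + δ t))
        + ((δ t)^2 * b2 t - δ t * γ t * b1 t + (γ t)^2 * b0 t
            + γ t * dδ t - δ t * dγ t)
          * ((α t * x t + β t) / (γ t * x t + δ t))^2) t := by
  intro t ht
  have hN : HasDerivAt (fun s => α s * x s + β s)
      (dα t * x t + α t * (b0 t + b1 t * x t + b2 t * (x t)^2) + dβ t) t :=
    ((hα t ht).mul (hx t ht)).add (hβ t ht)
  have hD : HasDerivAt (fun s => γ s * x s + δ s)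
      (dγ t * x t + γ t * (b0 t + b1 t * x t + b2 t * (x t)^2) + dδ t) t :=
    ((hγ t ht).mul (hx t ht)).add (hδ t ht)
  have h : HasDerivAt (fun s => (α s * x s + β s) / (γ s * x s + δ s)) _ t :=
    hN.div hD (hden t ht)
  convert h using 1
  have hd := hdet t ht
  have hne := hden t ht
  field_simp
  linear_combination (-(-(dα t * x t + dβ t) * (γ t * x t + δ t)
      + (α t * x t + β t) * (dγ t * x t + dδ t)
      + (β t * γ t - α t * δ t) * (b0 t + b1 t * x t + b2 t * (x t)^2))) * hd
end

section
/- Let I ⊆ ℝ be an interval, let b0, b1, b2 : I → ℝ, and let x1, x2, x3, x : I → ℝ be four differentiable solutions of the Riccati equation x' = b0(t) + b1(t)·x + b2(t)·x². Assume x(t) ≠ x1(t), x(t) ≠ x2(t), x3(t) ≠ x1(t), and x3(t) ≠ x2(t) for all t ∈ I. Then the cross-ratio t ↦ ((x(t) − x1(t))·(x3(t) − x2(t))) / ((x(t) − x2(t))·(x3(t) − x1(t))) is constant on I. -/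
lemma aux_const_of_deriv_zero (I : Set ℝ) (hI : Convex ℝ I) (f : ℝ → ℝ)
    (hf : ∀ t ∈ I, HasDerivAt f 0 t) :
    ∀ s ∈ I, ∀ t ∈ I, f s = f t := by
  have key : ∀ s ∈ I, ∀ t ∈ I, s ≤ t → f s = f t := by
    intro s hs t ht hst
    have hsub : Set.Icc s t ⊆ I := hI.ordConnected.out hs ht
    have := constant_of_has_deriv_right_zero
      (f := f) (a := s) (b := t)
      (fun u hu => (hf u (hsub hu)).continuousAt.continuousWithinAt)
      (fun u hu => (hf u (hsub (Set.Ico_subset_Icc_self hu))).hasDerivWithinAt)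
      t (Set.right_mem_Icc.mpr hst)
    exact this.symm
  intro s hs t ht
  rcases le_total s t with h | h
  · exact key s hs t ht h
  · exact (key t ht s hs h).symm

/-- The cross-ratio of four solutions of a Riccati equation
`x' = b0 + b1·x + b2·x²` is constant — the nonlinear superposition rule. -/
theorem riccati_cross_ratio_constant
    (I : Set ℝ) (hI : Convex ℝ I)
    (b0 b1 b2 x1 x2 x3 x : ℝ → ℝ)
    (h1 : ∀ t ∈ I, HasDerivAt x1 (b0 t + b1 t * x1 t + b2 t * (x1 t)^2) t)
    (h2 : ∀ t ∈ I, HasDerivAt x2 (b0 t + b1 t * x2 t + b2 t * (x2 t)^2) t)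
    (h3 : ∀ t ∈ I, HasDerivAt x3 (b0 t + b1 t * x3 t + b2 t * (x3 t)^2) t)
    (hx : ∀ t ∈ I, HasDerivAt x (b0 t + b1 t * x t + b2 t * (x t)^2) t)
    (hne1 : ∀ t ∈ I, x t ≠ x1 t) (hne2 : ∀ t ∈ I, x t ≠ x2 t)
    (hne3 : ∀ t ∈ I, x3 t ≠ x1 t) (hne4 : ∀ t ∈ I, x3 t ≠ x2 t) :
    ∀ s ∈ I, ∀ t ∈ I,
      ((x s - x1 s) * (x3 s - x2 s)) / ((x s - x2 s) * (x3 s - x1 s))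
        = ((x t - x1 t) * (x3 t - x2 t)) / ((x t - x2 t) * (x3 t - x1 t)) := by
  apply aux_const_of_deriv_zero I hI
  intro t ht
  have ha : HasDerivAt (fun t => x t - x1 t)
      ((b0 t + b1 t * x t + b2 t * (x t)^2) - (b0 t + b1 t * x1 t + b2 t * (x1 t)^2)) t :=
    (hx t ht).sub (h1 t ht)
  have hb : HasDerivAt (fun t => x3 t - x2 t)
      ((b0 t + b1 t * x3 t + b2 t * (x3 t)^2) - (b0 t + b1 t * x2 t + b2 t * (x2 t)^2)) t :=
    (h3 t ht).sub (h2 t ht)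
  have hc : HasDerivAt (fun t => x t - x2 t)
      ((b0 t + b1 t * x t + b2 t * (x t)^2) - (b0 t + b1 t * x2 t + b2 t * (x2 t)^2)) t :=
    (hx t ht).sub (h2 t ht)
  have hd : HasDerivAt (fun t => x3 t - x1 t)
      ((b0 t + b1 t * x3 t + b2 t * (x3 t)^2) - (b0 t + b1 t * x1 t + b2 t * (x1 t)^2)) t :=
    (h3 t ht).sub (h1 t ht)
  have hN := ha.mul hb
  have hD := hc.mul hd
  have hDne : (x t - x2 t) * (x3 t - x1 t) ≠ 0 :=
    mul_ne_zero (sub_ne_zero.mpr (hne2 t ht)) (sub_ne_zero.mpr (hne3 t ht))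
  have hR := hN.div hD hDne
  have h0 : (((b0 t + b1 t * x t + b2 t * (x t)^2) - (b0 t + b1 t * x1 t + b2 t * (x1 t)^2)) *
        (x3 t - x2 t) + (x t - x1 t) *
        ((b0 t + b1 t * x3 t + b2 t * (x3 t)^2) - (b0 t + b1 t * x2 t + b2 t * (x2 t)^2))) *
        ((x t - x2 t) * (x3 t - x1 t)) - ((x t - x1 t) * (x3 t - x2 t)) *
        (((b0 t + b1 t * x t + b2 t * (x t)^2) - (b0 t + b1 t * x2 t + b2 t * (x2 t)^2)) *
        (x3 t - x1 t) + (x t - x2 t) *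
        ((b0 t + b1 t * x3 t + b2 t * (x3 t)^2) - (b0 t + b1 t * x1 t + b2 t * (x1 t)^2))) = 0 := by
    ring
  simp only [Pi.mul_apply] at hR
  rw [h0, zero_div] at hR
  exact hR
end

section
/- Let I ⊆ ℝ be an interval and ω : I → ℝ. Let x, y : I → ℝ be twice differentiable with y(t) ≠ 0 for all t ∈ I, satisfying x'' = −ω(t)²·x and y'' = −ω(t)²·y + 1/y³ on I. Then the Ermakov invariant t ↦ (x(t)/y(t))² + (x(t)·y'(t) − y(t)·x'(t))² is constant on I. -/
/-- The Ermakov invariant `(x/y)² + (x·y' − y·x')²` of the Ermakov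
system `x'' = −ω(t)²·x`, `y'' = −ω(t)²·y + 1/y³` is constant. -/
theorem ermakov_invariant_constant
    (I : Set ℝ) (hI : Convex ℝ I) (ω x y vx vy : ℝ → ℝ)
    (hy0 : ∀ t ∈ I, y t ≠ 0)
    (hx : ∀ t ∈ I, HasDerivAt x (vx t) t)
    (hvx : ∀ t ∈ I, HasDerivAt vx (-(ω t)^2 * x t) t)
    (hy : ∀ t ∈ I, HasDerivAt y (vy t) t)
    (hvy : ∀ t ∈ I, HasDerivAt vy (-(ω t)^2 * y t + 1 / (y t)^3) t) :
    ∀ s ∈ I, ∀ t ∈ I,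
      (x s / y s)^2 + (x s * vy s - y s * vx s)^2
        = (x t / y t)^2 + (x t * vy t - y t * vx t)^2 := by
  set F : ℝ → ℝ := fun t => (x t / y t)^2 + (x t * vy t - y t * vx t)^2 with hF
  have key : ∀ t ∈ I, HasDerivWithinAt F 0 I t := by
    intro t ht
    have hyt := hy0 t ht
    have h1 : HasDerivAt F
        ((2:ℕ) * (x t / y t) ^ 1 * ((vx t * y t - x t * vy t) / y t ^ 2)
          + (2:ℕ) * (x t * vy t - y t * vx t) ^ 1 *
            ((vx t * vy t + x t * (-(ω t)^2 * y t + 1 / (y t)^3))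
              - (vy t * vx t + y t * (-(ω t)^2 * x t)))) t :=
      (((hx t ht).div (hy t ht) hyt).pow 2).add
        ((((hx t ht).mul (hvy t ht)).sub ((hy t ht).mul (hvx t ht))).pow 2)
    have h2 : ((2:ℕ) * (x t / y t) ^ 1 * ((vx t * y t - x t * vy t) / y t ^ 2)
          + (2:ℕ) * (x t * vy t - y t * vx t) ^ 1 *
            ((vx t * vy t + x t * (-(ω t)^2 * y t + 1 / (y t)^3))
              - (vy t * vx t + y t * (-(ω t)^2 * x t)))) = 0 := by
      field_simp
      ring
    exact (h2 ▸ h1).hasDerivWithinAt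
  intro s hs t ht
  have := hI.norm_image_sub_le_of_norm_hasDerivWithin_le
    (f' := fun _ => (0:ℝ)) (C := 0) key (fun u hu => by simp) ht hs
  have h0 : ‖F s - F t‖ ≤ 0 := by simpa using this
  have : F s = F t := by
    have := norm_nonneg (F s - F t)
    have heq : ‖F s - F t‖ = 0 := le_antisymm h0 this
    have := norm_eq_zero.mp heq
    linarith [sub_eq_zero.mp this]
  exact this
end

section
/- Let I ⊆ ℝ be an interval, ω : I → ℝ, and f, g : ℝ → ℝ continuous. Let x, y : I → ℝ be twice differentiable with x(t) > 0 and y(t) > 0 for all t ∈ I, satisfying the generalized Ermakov system x'' = (1/x³)·f(y/x) − ω(t)²·x and y'' = (1/y³)·g(y/x) − ω(t)²·y on I. Let F be a differentiable function on (0,∞) with F'(u) = −(1/u³)·f(1/u) + u·g(1/u) for all u > 0. Then the function t ↦ (1/2)·(x(t)·y'(t) − y(t)·x'(t))² + F(x(t)/y(t)) is constant on I. -/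
/-- First integral of the generalized Ermakov system
`x'' = x⁻³·f(y/x) − ω(t)²·x`, `y'' = y⁻³·g(y/x) − ω(t)²·y`: the quantity
`(1/2)·(x·y' − y·x')² + F(x/y)` is constant, where
`F'(u) = −u⁻³·f(1/u) + u·g(1/u)` on `(0, ∞)`. -/
theorem generalized_ermakov_first_integral
    (I : Set ℝ) (hI : Convex ℝ I) (ω f g : ℝ → ℝ)
    (hf : Continuous f) (hg : Continuous g)
    (x y vx vy : ℝ → ℝ)
    (hxpos : ∀ t ∈ I, 0 < x t) (hypos : ∀ t ∈ I, 0 < y t)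
    (hx : ∀ t ∈ I, HasDerivAt x (vx t) t)
    (hvx : ∀ t ∈ I, HasDerivAt vx
      ((1 / (x t)^3) * f (y t / x t) - (ω t)^2 * x t) t)
    (hy : ∀ t ∈ I, HasDerivAt y (vy t) t)
    (hvy : ∀ t ∈ I, HasDerivAt vy
      ((1 / (y t)^3) * g (y t / x t) - (ω t)^2 * y t) t)
    (F : ℝ → ℝ)
    (hF : ∀ u : ℝ, 0 < u →
      HasDerivAt F (-(1 / u^3) * f (1 / u) + u * g (1 / u)) u) :
    ∀ s ∈ I, ∀ t ∈ I,
      (1/2) * (x s * vy s - y s * vx s)^2 + F (x s / y s)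
        = (1/2) * (x t * vy t - y t * vx t)^2 + F (x t / y t) := by
  set E : ℝ → ℝ := fun t =>
    (1/2) * (x t * vy t - y t * vx t)^2 + F (x t / y t) with hE
  have key : ∀ t ∈ I, HasDerivAt E 0 t := by
    intro t ht
    have hxt := hxpos t ht
    have hyt := hypos t ht
    have hxne : x t ≠ 0 := ne_of_gt hxt
    have hyne : y t ≠ 0 := ne_of_gt hyt
    have hupos : 0 < x t / y t := div_pos hxt hyt
    have hdiv : HasDerivAt (fun t => x t / y t)
        ((vx t * y t - x t * vy t) / (y t)^2) t :=
      (hx t ht).div (hy t ht) hyne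
    have h1 : HasDerivAt (fun t => F (x t / y t))
        ((-(1 / (x t / y t)^3) * f (1 / (x t / y t))
          + (x t / y t) * g (1 / (x t / y t)))
          * ((vx t * y t - x t * vy t) / (y t)^2)) t :=
      (hF _ hupos).comp t hdiv
    have hW : HasDerivAt (fun t => x t * vy t - y t * vx t)
        ((vx t * vy t + x t * ((1 / (y t)^3) * g (y t / x t) - (ω t)^2 * y t))
          - (vy t * vx t + y t * ((1 / (x t)^3) * f (y t / x t) - (ω t)^2 * x t))) t :=
      ((hx t ht).mul (hvy t ht)).sub ((hy t ht).mul (hvx t ht))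
    have h2 : HasDerivAt (fun t => (1/2) * (x t * vy t - y t * vx t)^2)
        ((1/2) * (2 * (x t * vy t - y t * vx t) *
          ((vx t * vy t + x t * ((1 / (y t)^3) * g (y t / x t) - (ω t)^2 * y t))
          - (vy t * vx t + y t * ((1 / (x t)^3) * f (y t / x t) - (ω t)^2 * x t))))) t :=
      ((hW.pow 2).const_mul _).congr_deriv (by ring)
    have := h2.add h1
    refine this.congr_deriv ?_
    have hinv : 1 / (x t / y t) = y t / x t := by
      rw [one_div_div]
    rw [hinv]
    field_simp
    ring
  intro s hs t ht
  have : ∀ a ∈ I, ∀ b ∈ I, ‖E b - E a‖ ≤ 0 * ‖b - a‖ := by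
    intro a ha b hb
    exact hI.norm_image_sub_le_of_norm_hasDerivWithin_le
      (fun z hz => (key z hz).hasDerivWithinAt)
      (fun z hz => by simp) ha hb
  have h := this t ht s hs
  simp only [zero_mul, norm_le_zero_iff, sub_eq_zero] at h
  exact h
end

section
/- Let I ⊆ ℝ be an interval, ω : I → ℝ, and k ∈ ℝ. Let x : I → ℝ be twice differentiable with x(t) ≠ 0 for all t ∈ I, satisfying the Milne–Pinney equation x'' = −ω(t)²·x + k/x³, and let y : I → ℝ be a twice differentiable solution of y'' = −ω(t)²·y. Then the quantity t ↦ (1/2)·((y(t)·x'(t) − x(t)·y'(t))² + k·(y(t)/x(t))²) is constant on I. -/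
/-- The Ermakov invariant
`(1/2)·((y·x' − x·y')² + k·(y/x)²)` of the pair formed by a Milne–Pinney
solution `x'' = −ω(t)²·x + k/x³` and a harmonic oscillator solution
`y'' = −ω(t)²·y` is constant. -/
theorem milne_pinney_ermakov_invariant
    (I : Set ℝ) (hI : Convex ℝ I) (ω : ℝ → ℝ) (k : ℝ)
    (x vx y vy : ℝ → ℝ)
    (hx0 : ∀ t ∈ I, x t ≠ 0)
    (hx : ∀ t ∈ I, HasDerivAt x (vx t) t)
    (hvx : ∀ t ∈ I, HasDerivAt vx (-(ω t)^2 * x t + k / (x t)^3) t)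
    (hy : ∀ t ∈ I, HasDerivAt y (vy t) t)
    (hvy : ∀ t ∈ I, HasDerivAt vy (-(ω t)^2 * y t) t) :
    ∀ s ∈ I, ∀ t ∈ I,
      (1/2) * ((y s * vx s - x s * vy s)^2 + k * (y s / x s)^2)
        = (1/2) * ((y t * vx t - x t * vy t)^2 + k * (y t / x t)^2) := by
  set F : ℝ → ℝ := fun t =>
    (1/2) * ((y t * vx t - x t * vy t)^2 + k * (y t / x t)^2) with hF
  have key : ∀ t ∈ I, HasDerivAt F 0 t := by
    intro t ht
    have hxt := hx t ht
    have hvxt := hvx t ht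
    have hyt := hy t ht
    have hvyt := hvy t ht
    have hx0t := hx0 t ht
    have h1 : HasDerivAt (fun t => y t * vx t - x t * vy t)
        ((vy t * vx t + y t * (-(ω t)^2 * x t + k / (x t)^3))
          - (vx t * vy t + x t * (-(ω t)^2 * y t))) t :=
      (hyt.mul hvxt).sub (hxt.mul hvyt)
    have h2 : HasDerivAt (fun t => y t / x t)
        ((vy t * x t - y t * vx t) / (x t)^2) t := hyt.div hxt hx0t
    have h3 := ((h1.pow 2).add ((h2.pow 2).const_mul k)).const_mul (1/2)
    convert h3 using 1
    case e'_4 => rfl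
    case e'_5 => rfl
    case e'_8 => rfl
    have hx3 : (x t)^3 ≠ 0 := pow_ne_zero 3 hx0t
    norm_num only [Nat.cast_ofNat, pow_one]
    field_simp
    ring
  intro s hs t ht
  have h := hI.norm_image_sub_le_of_norm_hasDerivWithin_le (C := 0)
    (fun u hu => (key u hu).hasDerivWithinAt)
    (fun u hu => by simp) ht hs
  simp only [zero_mul, norm_le_zero_iff, sub_eq_zero] at h
  exact h
end

section
/- Let I ⊆ ℝ be an interval, ω : I → ℝ, and k ∈ ℝ. Let x : I → ℝ be a twice differentiable solution of the Milne–Pinney equation x'' = −ω(t)²·x + k/x³ with x(t) ≠ 0 on I, and let y, z : I → ℝ be twice differentiable solutions of the harmonic oscillator equation u'' = −ω(t)²·u. Define W = y·z' − z·y', I1 = (1/2)·((y·x' − x·y')² + k·(y/x)²), and I2 = (1/2)·((x·z' − z·x')² + k·(z/x)²) (all three are constant on I). Then for all t ∈ I the identity (W²·x(t)² − 2·I2·y(t)² − 2·I1·z(t)²)² = 4·(4·I1·I2 − k·W²)·y(t)²·z(t)² holds; equivalently, x = (√2/W)·(I2·y² + I1·z² ± √(4·I1·I2 − k·W²)·y·z)^{1/2}.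 -/
lemma const_of_hasDerivAt_zero {I : Set ℝ} (hI : Convex ℝ I) {f : ℝ → ℝ}
    (hf : ∀ t ∈ I, HasDerivAt f 0 t) :
    ∀ s ∈ I, ∀ t ∈ I, f s = f t := by
  have key : ∀ s ∈ I, ∀ t ∈ I, s ≤ t → f t = f s := by
    intro s hs t ht hst
    have hsub : Set.Icc s t ⊆ I := hI.ordConnected.out hs ht
    exact constant_of_has_deriv_right_zero
      (fun u hu => (hf u (hsub hu)).continuousAt.continuousWithinAt)
      (fun u hu => (hf u (hsub (Set.Ico_subset_Icc_self hu))).hasDerivWithinAt)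
      t (Set.right_mem_Icc.2 hst)
  intro s hs t ht
  rcases le_total s t with h | h
  · exact (key s hs t ht h).symm
  · exact key t ht s hs h

/-- For a Milne–Pinney solution `x` and two oscillator solutions
`y, z` with the same frequency, the Wronskian `W` and the two Ermakov
invariants `I1, I2` are constant, and they satisfy the nonlinear superposition
identity `(W²·x² − 2·I2·y² − 2·I1·z²)² = 4·(4·I1·I2 − k·W²)·y²·z²`,
i.e. `x = (√2/W)·(I2·y² + I1·z² ± √(4·I1·I2 − k·W²)·y·z)^{1/2}`. -/
theorem pinney_superposition_identity
    (I : Set ℝ) (hI : Convex ℝ I) (ω : ℝ → ℝ) (k : ℝ)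
    (x vx y vy z vz : ℝ → ℝ)
    (hx0 : ∀ t ∈ I, x t ≠ 0)
    (hx : ∀ t ∈ I, HasDerivAt x (vx t) t)
    (hvx : ∀ t ∈ I, HasDerivAt vx (-(ω t)^2 * x t + k / (x t)^3) t)
    (hy : ∀ t ∈ I, HasDerivAt y (vy t) t)
    (hvy : ∀ t ∈ I, HasDerivAt vy (-(ω t)^2 * y t) t)
    (hz : ∀ t ∈ I, HasDerivAt z (vz t) t)
    (hvz : ∀ t ∈ I, HasDerivAt vz (-(ω t)^2 * z t) t)
    (W I1 I2 : ℝ → ℝ)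
    (hW : ∀ t, W t = y t * vz t - z t * vy t)
    (hI1 : ∀ t, I1 t = (1/2) * ((y t * vx t - x t * vy t)^2 + k * (y t / x t)^2))
    (hI2 : ∀ t, I2 t = (1/2) * ((x t * vz t - z t * vx t)^2 + k * (z t / x t)^2)) :
    (∀ s ∈ I, ∀ t ∈ I, W s = W t ∧ I1 s = I1 t ∧ I2 s = I2 t) ∧
    (∀ t ∈ I,
      ((W t)^2 * (x t)^2 - 2 * I2 t * (y t)^2 - 2 * I1 t * (z t)^2)^2
        = 4 * (4 * I1 t * I2 t - k * (W t)^2) * (y t)^2 * (z t)^2) := by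
  have hWf : W = fun t => y t * vz t - z t * vy t := funext hW
  have hI1f : I1 = fun t => (1/2) * ((y t * vx t - x t * vy t)^2 + k * (y t / x t)^2) :=
    funext hI1
  have hI2f : I2 = fun t => (1/2) * ((x t * vz t - z t * vx t)^2 + k * (z t / x t)^2) :=
    funext hI2
  subst hWf hI1f hI2f
  constructor
  · -- constancy
    have hWc : ∀ s ∈ I, ∀ t ∈ I,
        (fun t => y t * vz t - z t * vy t) s = (fun t => y t * vz t - z t * vy t) t := by
      apply const_of_hasDerivAt_zero hI
      intro t ht
      have h := ((hy t ht).mul (hvz t ht)).sub ((hz t ht).mul (hvy t ht))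
      refine HasDerivAt.congr_deriv h ?_
      ring
    have hI1c : ∀ s ∈ I, ∀ t ∈ I,
        (fun t => (1/2) * ((y t * vx t - x t * vy t)^2 + k * (y t / x t)^2)) s
          = (fun t => (1/2) * ((y t * vx t - x t * vy t)^2 + k * (y t / x t)^2)) t := by
      apply const_of_hasDerivAt_zero hI
      intro t ht
      have hA := ((hy t ht).mul (hvx t ht)).sub ((hx t ht).mul (hvy t ht))
      have hq := (hy t ht).div (hx t ht) (hx0 t ht)
      have hD := ((hA.pow 2).add ((hq.pow 2).const_mul k)).const_mul (1/2)
      refine HasDerivAt.congr_deriv hD ?_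
      have h0 := hx0 t ht
      norm_num only [Pi.mul_apply, Pi.sub_apply, Pi.div_apply, Pi.pow_apply]
      field_simp
      ring
    have hI2c : ∀ s ∈ I, ∀ t ∈ I,
        (fun t => (1/2) * ((x t * vz t - z t * vx t)^2 + k * (z t / x t)^2)) s
          = (fun t => (1/2) * ((x t * vz t - z t * vx t)^2 + k * (z t / x t)^2)) t := by
      apply const_of_hasDerivAt_zero hI
      intro t ht
      have hB := ((hx t ht).mul (hvz t ht)).sub ((hz t ht).mul (hvx t ht))
      have hq := (hz t ht).div (hx t ht) (hx0 t ht)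
      have hD := ((hB.pow 2).add ((hq.pow 2).const_mul k)).const_mul (1/2)
      refine HasDerivAt.congr_deriv hD ?_
      have h0 := hx0 t ht
      norm_num only [Pi.mul_apply, Pi.sub_apply, Pi.div_apply, Pi.pow_apply]
      field_simp
      ring
    exact fun s hs t ht => ⟨hWc s hs t ht, hI1c s hs t ht, hI2c s hs t ht⟩
  · intro t ht
    have h0 := hx0 t ht
    simp only
    field_simp
    ring
end

section
/- Let I ⊆ ℝ be an interval, ω : I → ℝ, and k ∈ ℝ. Let y, z : I → ℝ be twice differentiable solutions of u'' = −ω(t)²·u whose Wronskian W = y·z' − z·y' is a nonzero constant. Let I1, I2 be real constants with 4·I1·I2 − k·W² ≥ 0, and suppose the function h(t) = (2/W²)·(I2·y(t)² + I1·z(t)² + √(4·I1·I2 − k·W²)·y(t)·z(t)) satisfies h(t) > 0 for all t ∈ I. Then x(t) = √(h(t)) is twice differentiable and satisfies the Milne–Pinney equation x'' = −ω(t)²·x + k/x³ on I. -/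
/-- Pinney's theorem: if `y, z` solve `u'' = −ω(t)²·u` with
constant nonzero Wronskian `W`, and `I1, I2` are constants with
`4·I1·I2 − k·W² ≥ 0`, then
`x = √((2/W²)·(I2·y² + I1·z² + √(4·I1·I2 − k·W²)·y·z))` (assumed positive
under the square root) solves the Milne–Pinney equation
`x'' = −ω(t)²·x + k/x³`. -/
theorem pinney_solution_from_oscillator_solutions
    (I : Set ℝ) (hI : Convex ℝ I) (ω : ℝ → ℝ) (k : ℝ)
    (y vy z vz : ℝ → ℝ)
    (hy : ∀ t ∈ I, HasDerivAt y (vy t) t)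
    (hvy : ∀ t ∈ I, HasDerivAt vy (-(ω t)^2 * y t) t)
    (hz : ∀ t ∈ I, HasDerivAt z (vz t) t)
    (hvz : ∀ t ∈ I, HasDerivAt vz (-(ω t)^2 * z t) t)
    (W : ℝ) (hWne : W ≠ 0)
    (hW : ∀ t ∈ I, y t * vz t - z t * vy t = W)
    (I1 I2 : ℝ) (hdisc : 4 * I1 * I2 - k * W^2 ≥ 0)
    (h : ℝ → ℝ)
    (hdef : ∀ t, h t = (2 / W^2) *
      (I2 * (y t)^2 + I1 * (z t)^2 + Real.sqrt (4 * I1 * I2 - k * W^2) * y t * z t))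
    (hpos : ∀ t ∈ I, 0 < h t) :
    ∃ v : ℝ → ℝ,
      (∀ t ∈ I, HasDerivAt (fun s => Real.sqrt (h s)) (v t) t) ∧
      (∀ t ∈ I, HasDerivAt v
        (-(ω t)^2 * Real.sqrt (h t) + k / (Real.sqrt (h t))^3) t) := by
  set c := Real.sqrt (4 * I1 * I2 - k * W^2) with hc
  have hc2 : c ^ 2 = 4 * I1 * I2 - k * W ^ 2 := Real.sq_sqrt hdisc
  have hEq : h = fun t => (2 / W ^ 2) *
      (I2 * (y t) ^ 2 + I1 * (z t) ^ 2 + c * y t * z t) := funext hdef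
  set h1 : ℝ → ℝ := fun t => (2 / W ^ 2) *
      (2 * I2 * y t * vy t + 2 * I1 * z t * vz t + c * (vy t * z t + y t * vz t))
    with hh1def
  set h2 : ℝ → ℝ := fun t => (2 / W ^ 2) *
      (2 * I2 * ((vy t) ^ 2 + y t * (-(ω t) ^ 2 * y t))
        + 2 * I1 * ((vz t) ^ 2 + z t * (-(ω t) ^ 2 * z t))
        + c * ((-(ω t) ^ 2 * y t * z t + vy t * vz t)
             + (vy t * vz t + y t * (-(ω t) ^ 2 * z t)))) with hh2def
  have hh1 : ∀ t ∈ I, HasDerivAt h (h1 t) t := by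
    intro t ht
    rw [hEq]
    have d1 := ((((hy t ht).pow 2).const_mul I2).add
        (((hz t ht).pow 2).const_mul I1)).add
        (((hy t ht).const_mul c).mul (hz t ht))
    have := d1.const_mul (2 / W ^ 2)
    convert this using 1
    · rfl
    · rfl
    · rfl
    simp only [hh1def]
    ring
  have hh2 : ∀ t ∈ I, HasDerivAt h1 (h2 t) t := by
    intro t ht
    have d1 := (((((hy t ht).mul (hvy t ht)).const_mul (2 * I2)).add
        ((((hz t ht).mul (hvz t ht)).const_mul (2 * I1)))).add
        ((((hvy t ht).mul (hz t ht)).add ((hy t ht).mul (hvz t ht))).const_mul c)).const_mul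
        (2 / W ^ 2)
    convert d1 using 1
    · rfl
    · rfl
    · funext s
      simp only [hh1def, Pi.add_apply, Pi.mul_apply]
      ring
    · simp only [hh2def]
      ring
  refine ⟨fun t => h1 t / (2 * Real.sqrt (h t)), ?_, ?_⟩
  · intro t ht
    exact (hh1 t ht).sqrt (ne_of_gt (hpos t ht))
  · intro t ht
    have hsne : Real.sqrt (h t) ≠ 0 := ne_of_gt (Real.sqrt_pos.mpr (hpos t ht))
    have hs2 : Real.sqrt (h t) ^ 2 = h t := Real.sq_sqrt (hpos t ht).le
    have hsqrt : HasDerivAt (fun s => Real.sqrt (h s)) (h1 t / (2 * Real.sqrt (h t))) t :=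
      (hh1 t ht).sqrt (ne_of_gt (hpos t ht))
    have hden : HasDerivAt (fun s => 2 * Real.sqrt (h s))
        (2 * (h1 t / (2 * Real.sqrt (h t)))) t := hsqrt.const_mul 2
    have hdiv := (hh2 t ht).div hden (by positivity)
    convert hdiv using 1
    · rfl
    · rfl
    · rfl
    have hw := hW t ht
    have hQP : 4 * (I2 * (y t)^2 + I1 * (z t)^2 + c * y t * z t)
          * (I2 * (vy t)^2 + I1 * (vz t)^2 + c * vy t * vz t)
        - (2 * I2 * y t * vy t + 2 * I1 * z t * vz t + c * (vy t * z t + y t * vz t))^2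
        = k * W^2 * W^2 := by
      have e1 : 4 * (I2 * (y t)^2 + I1 * (z t)^2 + c * y t * z t)
          * (I2 * (vy t)^2 + I1 * (vz t)^2 + c * vy t * vz t)
        - (2 * I2 * y t * vy t + 2 * I1 * z t * vz t + c * (vy t * z t + y t * vz t))^2
        = (4 * I1 * I2 - c^2) * (y t * vz t - z t * vy t)^2 := by ring
      rw [e1, hw]
      linear_combination (-W^2) * hc2
    have key : 2 * h t * h2 t - (h1 t) ^ 2 + 4 * (ω t) ^ 2 * (h t) ^ 2 = 4 * k := by
      have hht := hdef t
      simp only [hh1def, hh2def, ← hc] at *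
      rw [hht]
      have hW2 : (W:ℝ)^2 ≠ 0 := pow_ne_zero 2 hWne
      field_simp
      linear_combination 4 * hQP
    clear_value h1 h2
    field_simp
    linear_combination (-1) * key
      + (-(2 * h2 t + 4 * (ω t)^2 * ((Real.sqrt (h t))^2 + h t))) * hs2
end

section
/- Let u0, u1, ω0, x0, p0 ∈ ℝ with ω0 ≠ 0, let V(t) = u1·t + u0, and let I ⊆ ℝ be an interval containing 0 on which V(t) ≠ 0. Define τ(t) = ∫_0^t V(s)^{−2} ds and x(t) = V(t)·( cos(ω0·τ(t))·x0/V(0) + (1/ω0)·sin(ω0·τ(t))·(−u1·x0 + V(0)·p0) ). Then x is twice differentiable on I and satisfies x''(t) = −(ω0²/V(t)⁴)·x(t) for all t ∈ I, with x(0) = x0 and x'(0) = p0. -/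
/-- Explicit general solution of the oscillator
`x'' = −ω0²·x/V(t)⁴` with `V(t) = u1·t + u0`: with
`τ(t) = ∫_0^t V(s)⁻² ds`, the function
`x(t) = V(t)·(cos(ω0·τ(t))·x0/V(0) + (1/ω0)·sin(ω0·τ(t))·(−u1·x0 + V(0)·p0))`
is twice differentiable, solves the equation, and has `x(0) = x0`,
`x'(0) = p0`. -/
theorem explicit_solution_time_dependent_oscillator
    (u0 u1 ω0 x0 p0 : ℝ) (hω0 : ω0 ≠ 0)
    (I : Set ℝ) (hI : Convex ℝ I) (h0 : (0 : ℝ) ∈ I)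
    (V : ℝ → ℝ) (hVdef : ∀ t, V t = u1 * t + u0)
    (hVne : ∀ t ∈ I, V t ≠ 0)
    (τ : ℝ → ℝ) (hτ : ∀ t, τ t = ∫ s in (0 : ℝ)..t, ((V s)^2)⁻¹)
    (x : ℝ → ℝ)
    (hxdef : ∀ t, x t = V t *
      (Real.cos (ω0 * τ t) * x0 / V 0
        + (1 / ω0) * Real.sin (ω0 * τ t) * (-(u1 * x0) + V 0 * p0))) :
    ∃ v : ℝ → ℝ,
      (∀ t ∈ I, HasDerivAt x (v t) t) ∧
      (∀ t ∈ I, HasDerivAt v (-(ω0^2 / (V t)^4) * x t) t) ∧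
      x 0 = x0 ∧ v 0 = p0 := by
  have hV0 : V 0 ≠ 0 := hVne 0 h0
  have hVc : Continuous V := by
    rw [funext hVdef]; continuity
  have hVd : ∀ t, HasDerivAt V u1 t := by
    intro t
    rw [funext hVdef]
    simpa using ((hasDerivAt_id t).const_mul u1).add_const u0
  set A : ℝ := x0 / V 0 with hA
  set B : ℝ := -(u1 * x0) + V 0 * p0 with hB
  have hτ0 : τ 0 = 0 := by rw [hτ]; simp
  have hτd : ∀ t ∈ I, HasDerivAt τ (((V t) ^ 2)⁻¹) t := by
    intro t ht
    have hsub : Set.uIcc (0 : ℝ) t ⊆ I := hI.ordConnected.uIcc_subset h0 ht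
    have hcont : ContinuousOn (fun s => ((V s) ^ 2)⁻¹) (Set.uIcc (0 : ℝ) t) := by
      apply ContinuousOn.inv₀ ((hVc.pow 2).continuousOn)
      intro s hs
      exact pow_ne_zero 2 (hVne s (hsub hs))
    have hint : IntervalIntegrable (fun s => ((V s) ^ 2)⁻¹) MeasureTheory.volume 0 t :=
      hcont.intervalIntegrable
    have hmeas : StronglyMeasurableAtFilter (fun s => ((V s) ^ 2)⁻¹) (nhds t) :=
      ⟨Set.univ, Filter.univ_mem, ((hVc.pow 2).measurable.inv).stronglyMeasurable.aestronglyMeasurable⟩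
    have hct : ContinuousAt (fun s => ((V s) ^ 2)⁻¹) t :=
      ((hVc.pow 2).continuousAt).inv₀ (pow_ne_zero 2 (hVne t ht))
    have key := intervalIntegral.integral_hasDerivAt_right hint hmeas hct
    rw [funext hτ]
    exact key
  refine ⟨fun t => u1 * (Real.cos (ω0 * τ t) * A + (1 / ω0) * Real.sin (ω0 * τ t) * B)
      + (-(A * ω0) * Real.sin (ω0 * τ t) + B * Real.cos (ω0 * τ t)) / V t, ?_, ?_, ?_, ?_⟩
  · intro t ht
    have hVt := hVne t ht
    have hcos : HasDerivAt (fun t => Real.cos (ω0 * τ t))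
        (-Real.sin (ω0 * τ t) * (ω0 * ((V t) ^ 2)⁻¹)) t :=
      ((hτd t ht).const_mul ω0).cos
    have hsin : HasDerivAt (fun t => Real.sin (ω0 * τ t))
        (Real.cos (ω0 * τ t) * (ω0 * ((V t) ^ 2)⁻¹)) t :=
      ((hτd t ht).const_mul ω0).sin
    have hx1 := (hVd t).mul
      (((hcos.mul_const x0).div_const (V 0)).add ((hsin.const_mul (1 / ω0)).mul_const B))
    have hx2 : HasDerivAt x (u1 * (Real.cos (ω0 * τ t) * x0 / V 0
        + 1 / ω0 * Real.sin (ω0 * τ t) * B)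
        + V t * (-Real.sin (ω0 * τ t) * (ω0 * ((V t) ^ 2)⁻¹) * x0 / V 0
          + 1 / ω0 * (Real.cos (ω0 * τ t) * (ω0 * ((V t) ^ 2)⁻¹)) * B)) t := by
      rw [funext hxdef]; exact hx1
    convert hx2 using 1
    simp only [hA]
    field_simp
  · intro t ht
    have hVt := hVne t ht
    have hcos : HasDerivAt (fun t => Real.cos (ω0 * τ t))
        (-Real.sin (ω0 * τ t) * (ω0 * ((V t) ^ 2)⁻¹)) t :=
      ((hτd t ht).const_mul ω0).cos
    have hsin : HasDerivAt (fun t => Real.sin (ω0 * τ t))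
        (Real.cos (ω0 * τ t) * (ω0 * ((V t) ^ 2)⁻¹)) t :=
      ((hτd t ht).const_mul ω0).sin
    have hv1 := (((hcos.mul_const A).add ((hsin.const_mul (1 / ω0)).mul_const B)).const_mul u1).add
      ((((hsin.const_mul (-(A * ω0))).add (hcos.const_mul B))).div (hVd t) hVt)
    refine hv1.congr_deriv ?_
    rw [hxdef t]
    simp only [hA, Pi.add_apply]
    field_simp
    ring
  · rw [hxdef 0, hτ0]
    simp
    field_simp
  · simp only [hτ0, mul_zero, Real.cos_zero, Real.sin_zero]
    simp only [hA, hB]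
    field_simp
    ring
end

section
/- Let u0, u1, ω0 ∈ ℝ, let V(t) = u1·t + u0, and let I ⊆ ℝ be an interval on which V(t) ≠ 0. Let x, p : I → ℝ be differentiable functions satisfying x' = p and p' = −(ω0²/V(t)⁴)·x on I. Then the functions ξ(t) = x(t)/V(t) and π(t) = −u1·x(t) + V(t)·p(t) are differentiable and satisfy ξ'(t) = π(t)/V(t)² and π'(t) = −ω0²·ξ(t)/V(t)² for all t ∈ I. -/
/-- For the time-dependent frequency oscillator `x' = p`,
`p' = −ω0²·x/V(t)⁴` with `V(t) = u1·t + u0 ≠ 0`, the time-dependent linear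
change of variables `ξ = x/V`, `π = −u1·x + V·p` yields the system
`ξ' = π/V²`, `π' = −ω0²·ξ/V²`. -/
theorem time_dependent_oscillator_reduction
    (u0 u1 ω0 : ℝ) (I : Set ℝ) (hI : Convex ℝ I)
    (hV : ∀ t ∈ I, u1 * t + u0 ≠ 0)
    (x p : ℝ → ℝ)
    (hx : ∀ t ∈ I, HasDerivAt x (p t) t)
    (hp : ∀ t ∈ I, HasDerivAt p (-(ω0^2 / (u1 * t + u0)^4) * x t) t) :
    ∀ t ∈ I,
      HasDerivAt (fun s => x s / (u1 * s + u0))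
        ((-(u1 * x t) + (u1 * t + u0) * p t) / (u1 * t + u0)^2) t ∧
      HasDerivAt (fun s => -(u1 * x s) + (u1 * s + u0) * p s)
        (-(ω0^2 * (x t / (u1 * t + u0)) / (u1 * t + u0)^2)) t := by
  intro t ht
  have hVt := hV t ht
  have hxt := hx t ht
  have hpt := hp t ht
  have hVd : HasDerivAt (fun s : ℝ => u1 * s + u0) u1 t := by
    simpa using ((hasDerivAt_id t).const_mul u1).add_const u0
  constructor
  · have h : HasDerivAt (fun s => x s / (u1 * s + u0)) _ t := hxt.div hVd hVt
    convert h using 1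
    field_simp
    ring
  · have h : HasDerivAt (fun s => -(u1 * x s) + (u1 * s + u0) * p s) _ t :=
      ((hxt.const_mul u1).neg).add (hVd.mul hpt)
    convert h using 1
    field_simp
    ring
end
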